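/- Let g be a Lie algebra and let B₁, B₂: g → g be linear maps such that (g, B₁, B₂) is a Rota-Baxter system of Lie algebras. Then the bilinear operation [u,v]_R = [B₁(u), B₁(v)] − [B₂(u), B₂(v)] is a Lie bracket on g (it is alternating and satisfies the Jacobi identity). -/
import Mathlib

theorem stmt_18 {K : Type*} {g : Type*} [Field K] [LieRing g] [LieAlgebra K g]
    (B₁ B₂ : g →ₗ[K] g)
    (h1 : ∀ u v : g, ⁅B₁ u, B₁ v⁆ = B₁ (⁅B₁ u, B₁ v⁆ - ⁅B₂ u, B₂ v⁆))
    (h2 : ∀ u v : g, ⁅B₂ v, B₂ u⁆ = B₂ (⁅B₁ u, B₁ v⁆ - ⁅B₂ u, B₂ v⁆))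
    (brR : g → g → g) (hbr : ∀ u v, brR u v = ⁅B₁ u, B₁ v⁆ - ⁅B₂ u, B₂ v⁆) :
    (∀ u : g, brR u u = 0) ∧
    (∀ u v w : g, brR u (brR v w) + brR v (brR w u) + brR w (brR u v) = 0) := by
  have hB1 : ∀ u v : g, B₁ (brR u v) = ⁅B₁ u, B₁ v⁆ := by
    intro u v; rw [hbr, ← h1]
  have hB2 : ∀ u v : g, B₂ (brR u v) = -⁅B₂ u, B₂ v⁆ := by
    intro u v; rw [hbr, ← h2, lie_skew]
  constructor
  · intro u; rw [hbr, lie_self, lie_self, sub_zero]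
  · intro u v w
    have e : ∀ a b c : g, brR a (brR b c)
        = ⁅B₁ a, ⁅B₁ b, B₁ c⁆⁆ + ⁅B₂ a, ⁅B₂ b, B₂ c⁆⁆ := by
      intro a b c
      rw [hbr, hB1, hB2, lie_neg, sub_neg_eq_add]
    rw [e, e, e]
    have j1 := lie_jacobi (B₁ u) (B₁ v) (B₁ w)
    have j2 := lie_jacobi (B₂ u) (B₂ v) (B₂ w)
    linear_combination (norm := abel) j1 + j2
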